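/- Let K be a field of characteristic p > 0, Ω a subfield of K, and ζ an Ω-algebra automorphism of K of finite order E with p not dividing E. Suppose y, z ∈ K with y ≠ 0, and α, β, γ ∈ Ω with α ≠ 0 and γ ≠ 0, such that ζ(y) = α·y and ζ(z) = β·y + γ·z. Then there exists u ∈ Ω such that ζ(z − u·y) = γ·(z − u·y). In particular, z may be replaced by an element z' with the same γ-eigenvalue relation ζ(z') = γ·z'. -/

import Mathlib

/-- In characteristic `p > 0`, let `ζ` be an automorphism of `K` fixing
the subfield `Ω` pointwise, of finite order `E` with `p ∤ E`. If `ζ y = α y` and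
`ζ z = β y + γ z` with `y ≠ 0`, `α, β, γ ∈ Ω`, `α ≠ 0`, `γ ≠ 0`, then there is
`u ∈ Ω` with `ζ (z - u y) = γ (z - u y)`. -/
theorem stmt3 (K : Type*) [Field K] (p : ℕ) [CharP K p] (hp : 0 < p)
    (Ω : Subfield K) (ζ : K ≃+* K) (hζ : ∀ x ∈ Ω, ζ x = x)
    (E : ℕ) (hE : 0 < E) (horder : orderOf ζ = E) (hpE : ¬ p ∣ E)
    (y z : K) (hy0 : y ≠ 0) (α β γ : K)
    (hα : α ∈ Ω) (hβ : β ∈ Ω) (hγ : γ ∈ Ω) (hα0 : α ≠ 0) (hγ0 : γ ≠ 0)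
    (hy : ζ y = α * y) (hz : ζ z = β * y + γ * z) :
    ∃ u ∈ Ω, ζ (z - u * y) = γ * (z - u * y) := by
  have hζα : ζ α = α := hζ α hα
  have hζβ : ζ β = β := hζ β hβ
  have hζγ : ζ γ = γ := hζ γ hγ
  have hpow : ∀ (n : ℕ) (x : K), (ζ ^ (n + 1)) x = ζ ((ζ ^ n) x) := by
    intro n x
    rw [pow_succ']
    rfl
  have hEpow : ζ ^ E = 1 := by rw [← horder]; exact pow_orderOf_eq_one ζ
  have hone : ∀ x : K, (1 : K ≃+* K) x = x := fun _ => rfl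
  by_cases hαγ : α = γ
  · -- show β = 0, then take u = 0
    subst hαγ
    have hykey : ∀ n : ℕ, (ζ ^ n) y = α ^ n * y := by
      intro n
      induction n with
      | zero => simp [hone]
      | succ n ih =>
        rw [hpow, ih, map_mul, map_pow, hζα, hy, pow_succ]
        ring
    have hkey : ∀ n : ℕ, α * (ζ ^ n) z = (n : K) * β * α ^ n * y + α ^ (n + 1) * z := by
      intro n
      induction n with
      | zero => simp [hone]
      | succ n ih =>
        have : α * (ζ ^ (n + 1)) z = ζ (α * (ζ ^ n) z) := by
          rw [map_mul, hζα, hpow]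
        rw [this, ih, map_add, map_mul, map_mul, map_mul, map_mul, map_natCast,
          map_pow, map_pow, hζα, hζβ, hy, hz]
        push_cast
        ring
    have hαE : α ^ E = 1 := by
      have := hykey E
      rw [hEpow, hone] at this
      field_simp at this
      exact this.symm
    have h1 := hkey E
    rw [hEpow] at h1
    rw [hone, pow_succ, hαE] at h1
    have hEne : (E : K) ≠ 0 := by
      rw [Ne, CharP.cast_eq_zero_iff K p E]
      exact hpE
    have hβ0 : β = 0 := by
      have h2 : (E : K) * β * y = 0 := by linear_combination -h1
      rcases mul_eq_zero.mp h2 with h | h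
      · rcases mul_eq_zero.mp h with h | h
        · exact absurd h hEne
        · exact h
      · exact absurd h hy0
    refine ⟨0, Ω.zero_mem, ?_⟩
    rw [hβ0] at hz
    simpa using hz
  · refine ⟨β / (α - γ), Ω.div_mem hβ (Ω.sub_mem hα hγ), ?_⟩
    have hsub : α - γ ≠ 0 := sub_ne_zero.mpr hαγ
    have hζu : ζ (β / (α - γ)) = β / (α - γ) := hζ _ (Ω.div_mem hβ (Ω.sub_mem hα hγ))
    rw [map_sub, map_mul, hζu, hy, hz]
    field_simp
    ring
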